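/- The entropic transport cost of a glued coupling splits: if γ(x¹,...,xᵐ) = μ¹_{x¹}∏_{i=2}^m (πⁱ(x¹,xⁱ)/μ¹_{x¹}) where πⁱ ∈ Π(μ¹,μⁱ), then ∑_x (∑_{i=2}^m w(x¹,xⁱ)) γ_x + η H_{⊗_{i=1}^m μⁱ}(γ) = ∑_{i=2}^m [∑_{x¹,xⁱ} w(x¹,xⁱ)πⁱ(x¹,xⁱ) + η H_{μ¹⊗μⁱ}(πⁱ)]. -/

import Mathlib

lemma marg {X1 ι : Type*} [Fintype X1] [Fintype ι] [DecidableEq ι]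
    {X : ι → Type*} [∀ i, Fintype (X i)]
    (μ1 : X1 → ℝ) (hμ1 : ∀ z, 0 < μ1 z)
    (π : ∀ i, X1 × X i → ℝ) (hπm1 : ∀ i z, ∑ y, π i (z, y) = μ1 z)
    (i : ι) (F : X1 → X i → ℝ) :
    ∑ x : X1 × (∀ j, X j), F x.1 (x.2 i) * (μ1 x.1 * ∏ j, (π j (x.1, x.2 j) / μ1 x.1))
      = ∑ p : X1 × X i, F p.1 p.2 * π i p := by
  rw [Fintype.sum_prod_type, Fintype.sum_prod_type]
  refine Finset.sum_congr rfl fun z _ => ?_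
  set G : ∀ j, X j → ℝ := fun j y =>
    if hj : j = i then F z (hj ▸ y) * (π j (z, y) / μ1 z) else π j (z, y) / μ1 z with hG
  have key : ∀ g : ∀ j, X j,
      F z (g i) * ∏ j, (π j (z, g j) / μ1 z) = ∏ j, G j (g j) := by
    intro g
    rw [← Finset.mul_prod_erase Finset.univ (fun j => G j (g j)) (Finset.mem_univ i),
        ← Finset.mul_prod_erase Finset.univ (fun j => π j (z, g j) / μ1 z) (Finset.mem_univ i),
        ← mul_assoc]
    congr 1
    · simp [hG]
    · refine Finset.prod_congr rfl fun j hj => ?_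
      have : j ≠ i := Finset.ne_of_mem_erase hj
      simp [hG, this]
  calc ∑ g : ∀ j, X j, F z (g i) * (μ1 z * ∏ j, (π j (z, g j) / μ1 z))
      = μ1 z * ∑ g : ∀ j, X j, ∏ j, G j (g j) := by
        rw [Finset.mul_sum]
        refine Finset.sum_congr rfl fun g _ => ?_
        rw [← key]; ring
    _ = μ1 z * ∏ j, ∑ y, G j y := by rw [← Fintype.prod_sum]
    _ = μ1 z * ∑ y, G i y := by
        congr 1
        refine Finset.prod_eq_single i (fun j _ hj => ?_) (by simp)
        have : ∑ y, G j y = ∑ y, π j (z, y) / μ1 z := by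
          refine Finset.sum_congr rfl fun y _ => by simp [hG, hj]
        rw [this, ← Finset.sum_div, hπm1, div_self (hμ1 z).ne']
    _ = ∑ y, F z y * π i (z, y) := by
        rw [Finset.mul_sum]
        refine Finset.sum_congr rfl fun y _ => ?_
        simp only [hG, dif_pos rfl]
        field_simp
        rw [mul_assoc, mul_div_cancel_left₀ _ (hμ1 z).ne']

/-- The entropic transport cost of a glued coupling splits into the sum of the
two-marginal entropic costs: if `γ(x¹,...,xᵐ) = μ¹_{x¹} ∏_{i≥2} πⁱ(x¹,xⁱ)/μ¹_{x¹}`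
with `πⁱ ∈ Π(μ¹,μⁱ)`, then
`∑_x (∑ᵢ w(x¹,xⁱ)) γ_x + η H_{⊗μⁱ}(γ) = ∑ᵢ [∑ w πⁱ + η H_{μ¹⊗μⁱ}(πⁱ)]`. -/
theorem stmt_5 {X1 : Type*} {ι : Type*} [Fintype X1] [DecidableEq X1]
    [Fintype ι] [DecidableEq ι]
    {X : ι → Type*} [∀ i, Fintype (X i)] [∀ i, DecidableEq (X i)]
    (μ1 : X1 → ℝ) (μ : ∀ i, X i → ℝ)
    (hμ1 : ∀ z, 0 < μ1 z) (hμ1s : ∑ z, μ1 z = 1)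
    (hμ : ∀ i y, 0 < μ i y) (hμs : ∀ i, ∑ y, μ i y = 1)
    (w : ∀ i, X1 → X i → ℝ) (η : ℝ) (hη : 0 < η)
    (π : ∀ i, X1 × X i → ℝ)
    (hπ0 : ∀ i p, 0 ≤ π i p)
    (hπm1 : ∀ i z, ∑ y, π i (z, y) = μ1 z)
    (hπm2 : ∀ i y, ∑ z, π i (z, y) = μ i y)
    (γ : X1 × (∀ i, X i) → ℝ)
    (hγ : ∀ x, γ x = μ1 x.1 * ∏ i, (π i (x.1, x.2 i) / μ1 x.1)) :
    ∑ x, (∑ i, w i x.1 (x.2 i)) * γ x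
        + η * ∑ x, γ x * Real.log (γ x / (μ1 x.1 * ∏ i, μ i (x.2 i)))
      = ∑ i, (∑ p, w i p.1 p.2 * π i p
          + η * ∑ p, π i p * Real.log (π i p / (μ1 p.1 * μ i p.2))) := by
  -- pointwise decomposition of the log term
  have hpt : ∀ x : X1 × (∀ i, X i),
      γ x * Real.log (γ x / (μ1 x.1 * ∏ i, μ i (x.2 i)))
        = ∑ i, γ x * Real.log (π i (x.1, x.2 i) / (μ1 x.1 * μ i (x.2 i))) := by
    intro x
    by_cases h : ∀ i, 0 < π i (x.1, x.2 i)
    · have hprod : γ x / (μ1 x.1 * ∏ i, μ i (x.2 i))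
          = ∏ i, (π i (x.1, x.2 i) / (μ1 x.1 * μ i (x.2 i))) := by
        have h1 : μ1 x.1 ≠ 0 := (hμ1 x.1).ne'
        have h2 : (∏ i, μ i (x.2 i)) ≠ 0 :=
          (Finset.prod_pos fun i _ => hμ i (x.2 i)).ne'
        rw [hγ x, Finset.prod_div_distrib, Finset.prod_div_distrib,
          Finset.prod_mul_distrib, Finset.prod_const]
        field_simp
      rw [hprod, Real.log_prod (fun i _ => ?_), Finset.mul_sum]
      exact (div_pos (h i) (mul_pos (hμ1 x.1) (hμ i (x.2 i)))).ne'
    · push_neg at h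
      obtain ⟨j, hj⟩ := h
      have hj0 : π j (x.1, x.2 j) = 0 := le_antisymm hj (hπ0 j _)
      have hγ0 : γ x = 0 := by
        rw [hγ x, Finset.prod_eq_zero (Finset.mem_univ j) (by rw [hj0]; simp), mul_zero]
      simp [hγ0]
  have hw : ∑ x, (∑ i, w i x.1 (x.2 i)) * γ x = ∑ i, ∑ p, w i p.1 p.2 * π i p := by
    calc ∑ x, (∑ i, w i x.1 (x.2 i)) * γ x
        = ∑ x : X1 × (∀ i, X i), ∑ i, w i x.1 (x.2 i) * γ x := by
          exact Finset.sum_congr rfl fun x _ => Finset.sum_mul _ _ _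
      _ = ∑ i, ∑ x : X1 × (∀ i, X i), w i x.1 (x.2 i) * γ x := Finset.sum_comm
      _ = ∑ i, ∑ p, w i p.1 p.2 * π i p := by
          refine Finset.sum_congr rfl fun i _ => ?_
          simp only [hγ]
          exact marg μ1 hμ1 π hπm1 i (w i)
  have hent : ∑ x, γ x * Real.log (γ x / (μ1 x.1 * ∏ i, μ i (x.2 i)))
      = ∑ i, ∑ p, π i p * Real.log (π i p / (μ1 p.1 * μ i p.2)) := by
    calc ∑ x, γ x * Real.log (γ x / (μ1 x.1 * ∏ i, μ i (x.2 i)))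
        = ∑ x : X1 × (∀ i, X i), ∑ i,
            γ x * Real.log (π i (x.1, x.2 i) / (μ1 x.1 * μ i (x.2 i))) := by
          exact Finset.sum_congr rfl fun x _ => hpt x
      _ = ∑ i, ∑ x : X1 × (∀ i, X i),
            Real.log (π i (x.1, x.2 i) / (μ1 x.1 * μ i (x.2 i))) * γ x := by
          rw [Finset.sum_comm]
          exact Finset.sum_congr rfl fun i _ => Finset.sum_congr rfl fun x _ => mul_comm _ _
      _ = ∑ i, ∑ p, π i p * Real.log (π i p / (μ1 p.1 * μ i p.2)) := by
          refine Finset.sum_congr rfl fun i _ => ?_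
          simp only [hγ]
          rw [marg μ1 hμ1 π hπm1 i (fun z y => Real.log (π i (z, y) / (μ1 z * μ i y)))]
          exact Finset.sum_congr rfl fun p _ => mul_comm _ _
  rw [hw, hent, Finset.mul_sum, ← Finset.sum_add_distrib]
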